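/- Let C, C₁, C₂ ⊆ ℝ^d be closed, convex, salient (pointed) cones with C₁ ⊆ C and C₂ ⊆ C. Then the Minkowski sum C₁ + C₂ is closed. -/
import Mathlib

open Pointwise Filter Topology

theorem minkowski_sum_of_cones_closed (d : ℕ)
    (C C₁ C₂ : Set (EuclideanSpace ℝ (Fin d)))
    (hCclosed : IsClosed C) (hCconv : Convex ℝ C)
    (hCcone : ∀ x ∈ C, ∀ c : ℝ, 0 ≤ c → c • x ∈ C)
    (hCsal : C ∩ (-C) ⊆ {0})
    (hC₁closed : IsClosed C₁) (hC₁conv : Convex ℝ C₁)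
    (hC₁cone : ∀ x ∈ C₁, ∀ c : ℝ, 0 ≤ c → c • x ∈ C₁)
    (hC₁sal : C₁ ∩ (-C₁) ⊆ {0})
    (hC₂closed : IsClosed C₂) (hC₂conv : Convex ℝ C₂)
    (hC₂cone : ∀ x ∈ C₂, ∀ c : ℝ, 0 ≤ c → c • x ∈ C₂)
    (hC₂sal : C₂ ∩ (-C₂) ⊆ {0})
    (h₁ : C₁ ⊆ C) (h₂ : C₂ ⊆ C) :
    IsClosed (C₁ + C₂) := by
  -- key boundedness lemma
  have key : ∀ (a b : ℕ → EuclideanSpace ℝ (Fin d)) (z : EuclideanSpace ℝ (Fin d)),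
      (∀ n, a n ∈ C₁) → (∀ n, b n ∈ C₂) →
      Filter.Tendsto (fun n => a n + b n) atTop (𝓝 z) → ∃ M, ∀ n, ‖a n‖ ≤ M := by
    intro a b z ha hb hz
    by_contra h
    push_neg at h
    have h' : ∀ k : ℕ, ∃ n, (k : ℝ) < ‖a n‖ := fun k => h k
    choose ψ hψ using h'
    -- bound on the sums
    obtain ⟨K, hK⟩ : ∃ K, ∀ m, ‖a m + b m‖ ≤ K := by
      obtain ⟨K, hK⟩ := hz.norm.bddAbove_range
      exact ⟨K, fun m => hK ⟨m, rfl⟩⟩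
    have hpos : ∀ k, (0 : ℝ) < ‖a (ψ k)‖ := fun k =>
      lt_of_le_of_lt (Nat.cast_nonneg k) (hψ k)
    -- unit vectors
    set v : ℕ → EuclideanSpace ℝ (Fin d) := fun k => (‖a (ψ k)‖)⁻¹ • a (ψ k) with hv
    have hsph : ∀ k, v k ∈ Metric.sphere (0 : EuclideanSpace ℝ (Fin d)) 1 := by
      intro k
      simp [hv, norm_smul, abs_of_pos (inv_pos.mpr (hpos k)),
        inv_mul_cancel₀ (ne_of_gt (hpos k))]
    obtain ⟨u, hu_sph, φ, hφ, hvu⟩ :=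
      (isCompact_sphere (0 : EuclideanSpace ℝ (Fin d)) 1).tendsto_subseq hsph
    set n : ℕ → ℕ := fun j => ψ (φ j) with hn
    have hNj : ∀ j : ℕ, (j : ℝ) < ‖a (n j)‖ := by
      intro j
      exact lt_of_le_of_lt (Nat.cast_le.mpr (hφ.id_le j)) (hψ (φ j))
    have hNtop : Filter.Tendsto (fun j => ‖a (n j)‖) atTop atTop :=
      tendsto_atTop_mono (fun j => (hNj j).le)
        tendsto_natCast_atTop_atTop
    have hinv : Filter.Tendsto (fun j => (‖a (n j)‖)⁻¹) atTop (𝓝 0) :=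
      hNtop.inv_tendsto_atTop
    -- scaled sums go to 0
    have hsum0 : Filter.Tendsto (fun j => (‖a (n j)‖)⁻¹ • (a (n j) + b (n j)))
        atTop (𝓝 0) := by
      have hb0 : Filter.Tendsto (fun j => (‖a (n j)‖)⁻¹ * K) atTop (𝓝 0) := by
        simpa using hinv.mul_const K
      apply squeeze_zero_norm _ hb0
      intro j
      rw [norm_smul, Real.norm_eq_abs, abs_of_pos (inv_pos.mpr (hpos (φ j)))]
      have := hK (n j)
      have hinvnn : (0:ℝ) ≤ (‖a (n j)‖)⁻¹ := inv_nonneg.mpr (norm_nonneg _)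
      exact mul_le_mul_of_nonneg_left this hinvnn
    -- scaled a tends to u
    have hau : Filter.Tendsto (fun j => (‖a (n j)‖)⁻¹ • a (n j)) atTop (𝓝 u) := hvu
    -- scaled b tends to -u
    have hbu : Filter.Tendsto (fun j => (‖a (n j)‖)⁻¹ • b (n j)) atTop (𝓝 (-u)) := by
      have := hsum0.sub hau
      simp only [smul_add] at this
      simpa [zero_sub] using this
    have huC₁ : u ∈ C₁ :=
      hC₁closed.mem_of_tendsto hau (Filter.Eventually.of_forall fun j =>
        hC₁cone _ (ha _) _ (inv_nonneg.mpr (norm_nonneg _)))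
    have hnuC₂ : -u ∈ C₂ :=
      hC₂closed.mem_of_tendsto hbu (Filter.Eventually.of_forall fun j =>
        hC₂cone _ (hb _) _ (inv_nonneg.mpr (norm_nonneg _)))
    have hu0 : u = 0 := hCsal ⟨h₁ huC₁, by simpa [Set.mem_neg] using h₂ hnuC₂⟩
    rw [hu0] at hu_sph
    simp at hu_sph
  -- main sequential argument
  apply IsSeqClosed.isClosed
  intro x z hx hxz
  have hx' : ∀ n, ∃ p ∈ C₁, ∃ q ∈ C₂, p + q = x n := fun n => hx n
  choose a ha b hb hab using hx'
  have hzab : Filter.Tendsto (fun n => a n + b n) atTop (𝓝 z) := by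
    simpa only [hab] using hxz
  obtain ⟨M, hM⟩ := key a b z ha hb hzab
  have haball : ∀ n, a n ∈ Metric.closedBall (0 : EuclideanSpace ℝ (Fin d)) M := by
    intro n; simpa [Metric.mem_closedBall] using hM n
  obtain ⟨p, _, φ, hφ, hap⟩ :=
    (isCompact_closedBall (0 : EuclideanSpace ℝ (Fin d)) M).tendsto_subseq haball
  have hpC₁ : p ∈ C₁ :=
    hC₁closed.mem_of_tendsto hap (Filter.Eventually.of_forall fun j => ha _)
  have hbq : Filter.Tendsto (fun j => b (φ j)) atTop (𝓝 (z - p)) := by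
    have := (hzab.comp hφ.tendsto_atTop).sub hap
    simpa using this
  have hqC₂ : z - p ∈ C₂ :=
    hC₂closed.mem_of_tendsto hbq (Filter.Eventually.of_forall fun j => hb _)
  exact ⟨p, hpC₁, z - p, hqC₂, by show p + (z - p) = z; abel⟩
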